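/- Fix n ≥ 1. Let (A_k)_{k≥1} be a family of nonempty finite subsets of ℤ^n satisfying the superadditivity condition A_k + A_m ⊆ A_{k+m} for all k, m ≥ 1, and assume there is a constant C > 0 such that A_k ⊆ [−Ck, Ck]^n for all k ≥ 1. For k ≥ 1 let Δ_k = (1/k)·conv(A_k) ⊆ ℝ^n and let Δ = closure(conv(⋃_{k≥1} Δ_k)). Then for every ε > 0 there exists N > 0 such that for every k > N the Lebesgue measure of Δ \ Δ_k is less than ε. -/

import Mathlib

open Set MeasureTheory Pointwise

/-- `Δ_k = (1/k) · conv(A_k)`, the `k`-th rescaled convex hull inside `ℝⁿ`,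
where `A_k ⊆ ℤⁿ` is regarded as a subset of `ℝⁿ`. -/
def DeltaK (n : ℕ) (A : ℕ → Finset (Fin n → ℤ)) (k : ℕ) : Set (Fin n → ℝ) :=
  ((k : ℝ)⁻¹) • convexHull ℝ ((fun a : Fin n → ℤ => fun i => (a i : ℝ)) '' ↑(A k))

/-- `Δ = closure(conv(⋃_{k ≥ 1} Δ_k))`. -/
def DeltaLimit (n : ℕ) (A : ℕ → Finset (Fin n → ℤ)) : Set (Fin n → ℝ) :=
  closure (convexHull ℝ (⋃ k ∈ {k : ℕ | 1 ≤ k}, DeltaK n A k))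

namespace Stmt6Aux

/-- The unscaled convex hull `conv(A_k)` in `ℝⁿ`. -/
def BB (n : ℕ) (A : ℕ → Finset (Fin n → ℤ)) (k : ℕ) : Set (Fin n → ℝ) :=
  convexHull ℝ ((fun a : Fin n → ℤ => fun i => (a i : ℝ)) '' ↑(A k))

variable {n : ℕ} {A : ℕ → Finset (Fin n → ℤ)}

lemma deltaK_eq (k : ℕ) : DeltaK n A k = ((k : ℝ)⁻¹) • BB n A k := rfl

lemma convex_BB (k : ℕ) : Convex ℝ (BB n A k) := convex_convexHull ℝ _

lemma convex_deltaK (k : ℕ) : Convex ℝ (DeltaK n A k) :=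
  (convex_BB k).smul _

lemma isCompact_BB (k : ℕ) : IsCompact (BB n A k) :=
  ((A k).finite_toSet.image _).isCompact_convexHull ℝ

lemma isCompact_deltaK (k : ℕ) : IsCompact (DeltaK n A k) := by
  rw [deltaK_eq, ← Set.image_smul]
  exact (isCompact_BB k).image (continuous_const_smul _)

lemma measurableSet_deltaK (k : ℕ) : MeasurableSet (DeltaK n A k) :=
  (isCompact_deltaK k).isClosed.measurableSet

section Superadd

variable (hadd : ∀ k m, 1 ≤ k → 1 ≤ m → ∀ a ∈ A k, ∀ b ∈ A m, a + b ∈ A (k + m))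
include hadd

lemma BB_add_subset {k m : ℕ} (hk : 1 ≤ k) (hm : 1 ≤ m) :
    BB n A k + BB n A m ⊆ BB n A (k + m) := by
  rw [BB, BB, ← convexHull_add]
  apply convexHull_mono
  rintro _ ⟨x, hx, y, hy, rfl⟩
  obtain ⟨a, ha, rfl⟩ := hx
  obtain ⟨b, hb, rfl⟩ := hy
  refine ⟨a + b, by exact_mod_cast hadd k m hk hm a ha b hb, ?_⟩
  funext i
  simp only [Pi.add_apply]
  push_cast
  rfl

lemma nsmul_BB_subset : ∀ q : ℕ, 1 ≤ q → ∀ m : ℕ, 1 ≤ m →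
    ((q : ℝ)) • BB n A m ⊆ BB n A (q * m) := by
  intro q hq
  induction q, hq using Nat.le_induction with
  | base =>
    intro m hm
    simp
  | succ q hq ih =>
    intro m hm
    have hsplit : (((q + 1 : ℕ) : ℝ)) • BB n A m
        = (q : ℝ) • BB n A m + (1 : ℝ) • BB n A m := by
      push_cast
      exact (convex_BB m).add_smul (by positivity) zero_le_one
    rw [hsplit, one_smul]
    have h1 : (q : ℝ) • BB n A m + BB n A m ⊆ BB n A (q * m) + BB n A m :=
      Set.add_subset_add_right (ih m hm)
    refine h1.trans ?_
    have h2 := BB_add_subset hadd (Nat.one_le_iff_ne_zero.2 (by positivity)) hm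
      (k := q * m)
    have : (q + 1) * m = q * m + m := by ring
    rw [this]
    exact h2

lemma deltaK_subset_of_dvd {a b : ℕ} (ha : 1 ≤ a) (hb : 1 ≤ b) (hab : a ∣ b) :
    DeltaK n A a ⊆ DeltaK n A b := by
  obtain ⟨q, rfl⟩ := hab
  have hq : 1 ≤ q := Nat.pos_of_ne_zero (by rintro rfl; simp at hb)
  rintro x hx
  rw [deltaK_eq] at hx
  obtain ⟨y, hy, rfl⟩ := hx
  have hmem : (q : ℝ) • y ∈ BB n A (q * a) :=
    nsmul_BB_subset hadd q hq a ha (smul_mem_smul_set hy)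
  rw [mul_comm] at hmem
  rw [deltaK_eq]
  refine ⟨(q : ℝ) • y, hmem, ?_⟩
  show ((a * q : ℕ) : ℝ)⁻¹ • ((q : ℝ) • y) = ((a : ℕ) : ℝ)⁻¹ • y
  rw [smul_smul]
  congr 1
  have ha0 : (a : ℝ) ≠ 0 := Nat.cast_ne_zero.2 (by omega)
  have hq0 : (q : ℝ) ≠ 0 := Nat.cast_ne_zero.2 (by omega)
  push_cast
  field_simp

end Superadd

end Stmt6Aux

open Stmt6Aux

/-- For a superadditive family `(A_k)_{k ≥ 1}` of nonempty finite
subsets of `ℤⁿ` with `A_k ⊆ [−Ck, Ck]ⁿ`, the rescaled hulls `Δ_k = (1/k)conv(A_k)`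
exhaust `Δ = closure(conv(⋃_k Δ_k))` in measure: for every `ε > 0` there is `N`
such that for all `k > N`, `vol(Δ \ Δ_k) < ε`. -/
theorem stmt6 (n : ℕ) (hn : 1 ≤ n) (A : ℕ → Finset (Fin n → ℤ))
    (hne : ∀ k, 1 ≤ k → (A k).Nonempty)
    (hadd : ∀ k m, 1 ≤ k → 1 ≤ m → ∀ a ∈ A k, ∀ b ∈ A m, a + b ∈ A (k + m))
    (C : ℝ) (hC : 0 < C)
    (hbound : ∀ k, 1 ≤ k → ∀ a ∈ A k, ∀ i, |(a i : ℝ)| ≤ C * k) :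
    ∀ ε : ℝ, 0 < ε → ∃ N : ℕ, ∀ k, N < k →
      volume (DeltaLimit n A \ DeltaK n A k) < ENNReal.ofReal ε := by
  intro ε hε
  set G : Set (Fin n → ℝ) := convexHull ℝ (⋃ k ∈ {k : ℕ | 1 ≤ k}, DeltaK n A k) with hG
  have hΔdef : DeltaLimit n A = closure G := rfl
  set Δ : Set (Fin n → ℝ) := DeltaLimit n A with hΔ
  -- the box bound
  set Bx : Set (Fin n → ℝ) := Set.pi univ (fun _ => Icc (-C) C) with hBx
  have hDK_box : ∀ k, 1 ≤ k → DeltaK n A k ⊆ Bx := by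
    intro k hk
    have hBB : BB n A k ⊆ Set.pi univ (fun _ => Icc (-(C * k)) (C * k)) := by
      apply convexHull_min
      · rintro _ ⟨a, ha, rfl⟩ i _
        exact abs_le.1 (hbound k hk a ha i)
      · exact convex_pi fun i _ => convex_Icc _ _
    rintro x hx
    rw [deltaK_eq] at hx
    obtain ⟨y, hy, rfl⟩ := hx
    intro i _
    have hyi := hBB hy i (mem_univ i)
    have hk0 : (0 : ℝ) < k := by exact_mod_cast hk
    simp only [mem_Icc] at hyi ⊢
    constructor
    · rw [neg_le, Pi.smul_apply, smul_eq_mul]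
      calc -((k : ℝ)⁻¹ * y i) = (k : ℝ)⁻¹ * (-(y i)) := by ring
      _ ≤ (k : ℝ)⁻¹ * (C * k) := by
          apply mul_le_mul_of_nonneg_left _ (by positivity)
          linarith [hyi.1]
      _ = C := by field_simp
    · calc ((k : ℝ)⁻¹ • y) i = (k : ℝ)⁻¹ * y i := rfl
      _ ≤ (k : ℝ)⁻¹ * (C * k) := by
          apply mul_le_mul_of_nonneg_left hyi.2 (by positivity)
      _ = C := by field_simp
  have hΔ_box : Δ ⊆ Bx := by
    rw [hΔdef]
    apply closure_minimal
    · apply convexHull_min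
      · exact iUnion₂_subset fun k hk => hDK_box k hk
      · exact convex_pi fun i _ => convex_Icc _ _
    · exact isClosed_set_pi fun i _ => isClosed_Icc
  have hBxfin : volume Bx ≠ ⊤ :=
    (IsCompact.measure_lt_top (isCompact_univ_pi fun i => isCompact_Icc)).ne
  have hΔfin : volume Δ ≠ ⊤ := ne_top_of_le_ne_top hBxfin (measure_mono hΔ_box)
  have hΔmeas : MeasurableSet Δ := isClosed_closure.measurableSet
  have hΔkfin : ∀ k, volume (DeltaK n A k) ≠ ⊤ := fun k =>
    ((isCompact_deltaK k).measure_lt_top).ne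
  -- each Δ_k is inside Δ
  have hDK_sub : ∀ k, 1 ≤ k → DeltaK n A k ⊆ Δ := by
    intro k hk
    rw [hΔdef]
    refine subset_trans ?_ subset_closure
    refine subset_trans ?_ (subset_convexHull ℝ _)
    exact subset_iUnion₂ (s := fun k _ => DeltaK n A k) k hk
  -- G is inside the union of factorial-indexed Δ's
  have hG_sub : G ⊆ ⋃ j, DeltaK n A (Nat.factorial j) := by
    rw [hG]
    apply convexHull_min
    · refine iUnion₂_subset fun k hk => ?_
      refine subset_iUnion_of_subset k ?_
      exact deltaK_subset_of_dvd hadd hk (Nat.factorial_pos k)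
        (Nat.dvd_factorial hk le_rfl)
    · intro x hx y hy a b ha hb hab
      simp only [mem_iUnion] at hx hy ⊢
      obtain ⟨i, hi⟩ := hx
      obtain ⟨j, hj⟩ := hy
      refine ⟨max i j, ?_⟩
      have h1 : DeltaK n A (Nat.factorial i) ⊆ DeltaK n A (Nat.factorial (max i j)) :=
        deltaK_subset_of_dvd hadd (Nat.factorial_pos i) (Nat.factorial_pos _)
          (Nat.factorial_dvd_factorial (le_max_left i j))
      have h2 : DeltaK n A (Nat.factorial j) ⊆ DeltaK n A (Nat.factorial (max i j)) :=
        deltaK_subset_of_dvd hadd (Nat.factorial_pos j) (Nat.factorial_pos _)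
          (Nat.factorial_dvd_factorial (le_max_right i j))
      exact convex_deltaK _ (h1 hi) (h2 hj) ha hb hab
  -- the factorial tail sets
  set f : ℕ → Set (Fin n → ℝ) := fun j => Δ \ DeltaK n A (Nat.factorial j) with hf
  have hanti : Antitone f := by
    apply antitone_nat_of_succ_le
    intro j
    apply diff_subset_diff_right
    exact deltaK_subset_of_dvd hadd (Nat.factorial_pos j) (Nat.factorial_pos _)
      (Nat.factorial_dvd_factorial (Nat.le_succ j))
  have hinter : volume (⋂ j, f j) = 0 := by
    have hsub : (⋂ j, f j) ⊆ frontier G := by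
      intro x hx
      simp only [hf, mem_iInter, mem_diff] at hx
      have hxΔ : x ∈ closure G := (hx 0).1
      have hxG : x ∉ G := by
        intro hmem
        obtain ⟨j, hj⟩ := mem_iUnion.1 (hG_sub hmem)
        exact (hx j).2 hj
      rw [frontier, mem_diff]
      exact ⟨hxΔ, fun hint => hxG (interior_subset hint)⟩
    refine le_antisymm ?_ (zero_le)
    calc volume (⋂ j, f j) ≤ volume (frontier G) := measure_mono hsub
    _ = 0 := (convex_convexHull ℝ _).addHaar_frontier volume
  have htends : Filter.Tendsto (fun j => volume (f j)) Filter.atTop (nhds 0) := by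
    have := tendsto_measure_iInter_atTop
      (μ := volume)
      (fun j => (hΔmeas.diff (measurableSet_deltaK _)).nullMeasurableSet)
      hanti ⟨0, ne_top_of_le_ne_top hΔfin (measure_mono diff_subset)⟩
    rw [hinter] at this
    exact this
  have hhalf : (0 : ENNReal) < ENNReal.ofReal (ε / 2) := ENNReal.ofReal_pos.2 (half_pos hε)
  obtain ⟨j, hj⟩ := (htends.eventually (gt_mem_nhds hhalf)).exists
  -- now set m := j!
  set m : ℕ := Nat.factorial j with hmdef
  have hm1 : 1 ≤ m := Nat.factorial_pos j
  have hsmall : volume (Δ \ DeltaK n A m) < ENNReal.ofReal (ε / 2) := hj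
  set Vr : ℝ := (volume Δ).toReal with hVr
  have hVr0 : 0 ≤ Vr := ENNReal.toReal_nonneg
  refine ⟨max (2 * m) (⌈2 * (n : ℝ) * m * Vr / ε⌉₊), ?_⟩
  intro k hk
  have hk2m : 2 * m < k := lt_of_le_of_lt (le_max_left _ _) hk
  have hkceil : (⌈2 * (n : ℝ) * m * Vr / ε⌉₊ : ℕ) < k := lt_of_le_of_lt (le_max_right _ _) hk
  have hk1 : 1 ≤ k := by omega
  have hmk : m ≤ k := by omega
  have hk0 : (0 : ℝ) < k := by exact_mod_cast hk1
  have hm0 : (0 : ℝ) < m := by exact_mod_cast hm1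
  -- division with remainder
  set q : ℕ := (k - 1) / m with hqdef
  set r : ℕ := (k - 1) % m + 1 with hrdef
  have hmod : (k - 1) % m < m := Nat.mod_lt _ hm1
  have hr1 : 1 ≤ r := by omega
  have hrm : r ≤ m := by omega
  have hqmr : q * m + r = k := by
    have h1 : m * q + (k - 1) % m = k - 1 := by rw [hqdef]; exact Nat.div_add_mod (k - 1) m
    have h2 : q * m = m * q := Nat.mul_comm _ _
    omega
  have hq1 : 1 ≤ q := by
    rw [hqdef]
    rw [Nat.one_le_div_iff hm1]
    omega
  obtain ⟨a, ha⟩ := hne r hr1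
  -- the scaling factor
  set t : ℝ := ((q * m : ℕ) : ℝ) / k with ht
  have hqm_eq : ((q * m : ℕ) : ℝ) = (k : ℝ) - r := by
    have : (q * m : ℕ) = k - r := by omega
    rw [this]
    push_cast [Nat.cast_sub (by omega : r ≤ k)]
    ring
  have ht0 : 0 ≤ t := by positivity
  have htle1 : t ≤ 1 := by
    rw [ht, div_le_one hk0, hqm_eq]
    have : (0 : ℝ) < r := by exact_mod_cast hr1
    linarith
  have htlow : 1 - (m : ℝ) / k ≤ t := by
    rw [ht, hqm_eq, sub_div, div_self hk0.ne']
    have hrR : (r : ℝ) ≤ m := by exact_mod_cast hrm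
    have hdd : (r : ℝ) / k ≤ (m : ℝ) / k := by gcongr
    linarith
  -- the key inclusion: a shrunken translate of Δ_m lies in Δ_k
  set v : Fin n → ℝ := (k : ℝ)⁻¹ • (fun i => ((a i : ℝ))) with hv
  have hsubkey : ∀ y ∈ DeltaK n A m, t • y + v ∈ DeltaK n A k := by
    intro y hy
    rw [deltaK_eq] at hy
    obtain ⟨z, hz, rfl⟩ := hy
    have hmemq : (q : ℝ) • z ∈ BB n A (q * m) :=
      nsmul_BB_subset hadd q hq1 m hm1 (smul_mem_smul_set hz)
    have hmema : (fun i => ((a i : ℝ))) ∈ BB n A r :=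
      subset_convexHull ℝ _ (mem_image_of_mem _ ha)
    have hmemsum : (q : ℝ) • z + (fun i => ((a i : ℝ))) ∈ BB n A (q * m + r) :=
      BB_add_subset hadd (Nat.mul_pos hq1 hm1) hr1 (Set.add_mem_add hmemq hmema)
    rw [hqmr] at hmemsum
    rw [deltaK_eq]
    refine ⟨(q : ℝ) • z + (fun i => ((a i : ℝ))), hmemsum, ?_⟩
    show (k : ℝ)⁻¹ • ((q : ℝ) • z + fun i => ((a i : ℝ)))
        = t • ((m : ℝ)⁻¹ • z) + v
    rw [smul_add, smul_smul, smul_smul]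
    congr 1
    · congr 1
      rw [ht]
      push_cast
      field_simp
  have hincl : v +ᵥ (t • DeltaK n A m) ⊆ DeltaK n A k := by
    rintro x ⟨w, ⟨y, hy, rfl⟩, rfl⟩
    simpa [add_comm] using hsubkey y hy
  -- measure estimate for Δ_k
  have hfinrank : Module.finrank ℝ (Fin n → ℝ) = n := by
    simp [Module.finrank_fin_fun]
  have hμk : ENNReal.ofReal (t ^ n) * volume (DeltaK n A m) ≤ volume (DeltaK n A k) := by
    calc ENNReal.ofReal (t ^ n) * volume (DeltaK n A m)
        = volume (t • DeltaK n A m) := by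
          rw [MeasureTheory.Measure.addHaar_smul_of_nonneg volume ht0, hfinrank]
    _ = volume (v +ᵥ (t • DeltaK n A m)) := (measure_vadd _ _ _).symm
    _ ≤ volume (DeltaK n A k) := measure_mono hincl
  -- Bernoulli bound: 1 - t^n ≤ n * m / k
  have htn1 : t ^ n ≤ 1 := pow_le_one₀ ht0 htle1
  have hbern : 1 - t ^ n ≤ (n : ℝ) * m / k := by
    have hmk1 : (m : ℝ) / k ≤ 1 := by
      rw [div_le_one hk0]
      exact_mod_cast hmk
    have h1 : (1 : ℝ) + (n : ℝ) * (-(m / k)) ≤ (1 + -(m / k)) ^ n :=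
      one_add_mul_le_pow (by linarith) n
    have h2 : (1 - (m : ℝ) / k) ^ n ≤ t ^ n := by
      apply pow_le_pow_left₀ (by linarith) htlow
    have : (1 : ℝ) - (n : ℝ) * (m / k) ≤ t ^ n := by
      calc (1 : ℝ) - (n : ℝ) * (m / k) = 1 + (n : ℝ) * (-(m / k)) := by ring
      _ ≤ (1 + -(m / k)) ^ n := h1
      _ = (1 - (m : ℝ) / k) ^ n := by ring_nf
      _ ≤ t ^ n := h2
    have heq : (n : ℝ) * m / k = (n : ℝ) * (m / k) := by ring
    linarith [heq ▸ this]
  -- numeric bound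
  have hkey : ((n : ℝ) * m / k) * Vr ≤ ε / 2 := by
    have hceil : 2 * (n : ℝ) * m * Vr / ε < k := by
      calc 2 * (n : ℝ) * m * Vr / ε ≤ (⌈2 * (n : ℝ) * m * Vr / ε⌉₊ : ℝ) := Nat.le_ceil _
      _ < k := by exact_mod_cast hkceil
    rw [div_mul_eq_mul_div, div_le_iff₀ hk0]
    have h2 : 2 * (n : ℝ) * m * Vr < k * ε := by
      rw [div_lt_iff₀ hε] at hceil
      linarith
    nlinarith
  -- put everything together
  have hdiff : volume (Δ \ DeltaK n A k)
      = volume Δ - volume (DeltaK n A k) :=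
    measure_diff (hDK_sub k hk1) (measurableSet_deltaK k).nullMeasurableSet (hΔkfin k)
  rw [hdiff]
  rw [ENNReal.sub_lt_iff_lt_right (hΔkfin k) (measure_mono (hDK_sub k hk1))]
  have hμΔm_le : volume (DeltaK n A m) ≤ volume Δ := measure_mono (hDK_sub m hm1)
  have hμΔm_fin : volume (DeltaK n A m) ≠ ⊤ := hΔkfin m
  have hstep1 : volume Δ < volume (DeltaK n A m) + ENNReal.ofReal (ε / 2) := by
    calc volume Δ ≤ volume (DeltaK n A m ∪ (Δ \ DeltaK n A m)) := by
          apply measure_mono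
          intro x hx
          by_cases h : x ∈ DeltaK n A m
          · exact Or.inl h
          · exact Or.inr ⟨hx, h⟩
    _ ≤ volume (DeltaK n A m) + volume (Δ \ DeltaK n A m) := measure_union_le _ _
    _ < volume (DeltaK n A m) + ENNReal.ofReal (ε / 2) := by
        exact ENNReal.add_lt_add_left hμΔm_fin hsmall
  have hsplit : volume (DeltaK n A m)
      = ENNReal.ofReal (t ^ n) * volume (DeltaK n A m)
        + ENNReal.ofReal (1 - t ^ n) * volume (DeltaK n A m) := by
    rw [← add_mul, ← ENNReal.ofReal_add (by positivity) (by linarith)]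
    rw [add_sub_cancel]
    simp
  have hsecond : ENNReal.ofReal (1 - t ^ n) * volume (DeltaK n A m)
      ≤ ENNReal.ofReal (ε / 2) := by
    calc ENNReal.ofReal (1 - t ^ n) * volume (DeltaK n A m)
        ≤ ENNReal.ofReal (1 - t ^ n) * volume Δ := by gcongr
    _ = ENNReal.ofReal (1 - t ^ n) * ENNReal.ofReal Vr := by
        rw [hVr, ENNReal.ofReal_toReal hΔfin]
    _ = ENNReal.ofReal ((1 - t ^ n) * Vr) := by
        rw [← ENNReal.ofReal_mul (by linarith)]
    _ ≤ ENNReal.ofReal (ε / 2) := by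
        apply ENNReal.ofReal_le_ofReal
        calc (1 - t ^ n) * Vr ≤ ((n : ℝ) * m / k) * Vr := by
              apply mul_le_mul_of_nonneg_right hbern hVr0
        _ ≤ ε / 2 := hkey
  calc volume Δ < volume (DeltaK n A m) + ENNReal.ofReal (ε / 2) := hstep1
  _ = (ENNReal.ofReal (t ^ n) * volume (DeltaK n A m)
        + ENNReal.ofReal (1 - t ^ n) * volume (DeltaK n A m)) + ENNReal.ofReal (ε / 2) := by
      rw [← hsplit]
  _ ≤ (volume (DeltaK n A k) + ENNReal.ofReal (ε / 2)) + ENNReal.ofReal (ε / 2) := by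
      gcongr
  _ = ENNReal.ofReal ε + volume (DeltaK n A k) := by
      rw [add_assoc, ← ENNReal.ofReal_add (by positivity) (by positivity), add_halves]
      ring
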